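/- Suppose P and Q each satisfy the quasi-periodicity conditions P(ξ_n−η)·P(ξ_n+iπ) = −P(ξ_n−η+iπ)·P(ξ_n) and Q(ξ_n−η)·Q(ξ_n+iπ) = −Q(ξ_n−η+iπ)·Q(ξ_n) for all n, and assume ξ_i − ξ_j ∉ iπℤ for i ≠ j, p_i − p_j ∉ iπℤ for i ≠ j, ξ_i − p_k ∉ iπℤ, ξ_i − p_k − η ∉ iπℤ, P(ξ_i) ≠ 0, P(ξ_i+iπ) ≠ 0, Q(ξ_i−η) ≠ 0 and Q(ξ_i−η+iπ) ≠ 0 for all i, k. Then for every α ∈ ℂ: S(PQ,α) = ( e^{∑_i (ξ_i − p_i)/2} / 2^N ) · det_{1≤i,k≤N} [ M_{i,k} ] / det_{1≤i,k≤N} [ 1/sinh(ξ_i−p_k) ], where M_{i,k} = 1/sinh((ξ_i−p_k)/2) − i/sinh((ξ_i−p_k+iπ)/2) + α·e^{−η/2}·( f̃(ξ_i)/sinh((ξ_i−p_k−η)/2) − i·f̃(ξ_i+iπ)/sinh((ξ_i−p_k−η+iπ)/2) ). -/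

import Mathlib

open Complex Finset

noncomputable section

def Vand {m : ℕ} (x : Fin m → ℂ) : ℂ :=
  ∏ i : Fin m, ∏ j ∈ Finset.Ioi i, Complex.sinh (x j - x i)

def trigPoly {N : ℕ} (r : Fin N → ℂ) (l : ℂ) : ℂ := ∏ j, Complex.sinh ((l - r j) / 2)
def iπ : ℂ := (Real.pi : ℂ) * Complex.I

/-- the scalar product `S(PQ,α)` of two separate states -/
def SP {N : ℕ} (η : ℂ) (ξ : Fin N → ℂ) (P Q : ℂ → ℂ) (α : ℂ) : ℂ :=
  ∑ h : Fin N → Fin 2,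
    (∏ n, (α * P (ξ n) * Q (ξ n) / (P (ξ n - η) * Q (ξ n - η))) ^ (1 - (h n : ℕ))) *
      Vand (fun n => ξ n - ((1 - (h n : ℕ) : ℕ) : ℂ) * η) / Vand ξ

namespace SPaux

lemma exp_sq_sub (u v : ℂ) :
    Complex.exp (2*u) - Complex.exp (2*v) = 2 * Complex.exp (u+v) * Complex.sinh (u-v) := by
  have h1 : 2*u = (u+v) + (u-v) := by ring
  have h2 : 2*v = (u+v) + -(u-v) := by ring
  have ha : Complex.exp (u-v) = Complex.cosh (u-v) + Complex.sinh (u-v) :=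
    (Complex.cosh_add_sinh _).symm
  have hb : Complex.exp (-(u-v)) = Complex.cosh (u-v) - Complex.sinh (u-v) :=
    (Complex.cosh_sub_sinh _).symm
  rw [h1, h2]
  simp only [Complex.exp_add]
  rw [ha, hb]
  ring

lemma sinh_ne_zero' {u : ℂ} (h : ∀ m : ℤ, u ≠ (m:ℂ) * iπ) : Complex.sinh u ≠ 0 := by
  intro h0
  have hs : Complex.sin (u * Complex.I) = 0 := by rw [Complex.sin_mul_I, h0, zero_mul]
  rcases Complex.sin_eq_zero_iff.mp hs with ⟨k, hk⟩
  apply h (-k)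
  have h3 : u * Complex.I * Complex.I = (k:ℂ) * (Real.pi:ℂ) * Complex.I := by rw [hk]
  rw [mul_assoc, Complex.I_mul_I, mul_neg_one] at h3
  rw [iπ]
  push_cast
  linear_combination -h3

lemma sinh_half_ne_zero {u : ℂ} (h : ∀ m : ℤ, u ≠ (m:ℂ) * iπ) : Complex.sinh (u/2) ≠ 0 := by
  intro h0
  have hs : Complex.sin (u/2 * Complex.I) = 0 := by rw [Complex.sin_mul_I, h0, zero_mul]
  rcases Complex.sin_eq_zero_iff.mp hs with ⟨k, hk⟩
  apply h (-2*k)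
  have h3 : u/2 * Complex.I * Complex.I = (k:ℂ) * (Real.pi:ℂ) * Complex.I := by rw [hk]
  rw [mul_assoc, Complex.I_mul_I, mul_neg_one] at h3
  rw [iπ]
  push_cast
  linear_combination -2*h3

lemma cosh_half_ne_zero {u : ℂ} (h : ∀ m : ℤ, u ≠ (m:ℂ) * iπ) : Complex.cosh (u/2) ≠ 0 := by
  intro h0
  have hs : Complex.cos (u/2 * Complex.I) = 0 := by rw [Complex.cos_mul_I, h0]
  rcases Complex.cos_eq_zero_iff.mp hs with ⟨k, hk⟩
  apply h (-(2*k+1))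
  have h3 : u/2 * Complex.I * Complex.I = (2*(k:ℂ)+1) * (Real.pi:ℂ)/2 * Complex.I := by
    rw [hk]
  rw [mul_assoc, Complex.I_mul_I, mul_neg_one] at h3
  rw [iπ]
  push_cast
  linear_combination -2*h3

lemma sinh_add_pi_I (u : ℂ) : Complex.sinh (u + iπ) = -Complex.sinh u := by
  rw [iπ, Complex.sinh_add, Complex.cosh_mul_I, Complex.sinh_mul_I,
    ← Complex.ofReal_cos, ← Complex.ofReal_sin, Real.cos_pi, Real.sin_pi]
  push_cast
  ring

lemma sinh_half_shift (u : ℂ) :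
    Complex.sinh ((u + iπ)/2) = Complex.I * Complex.cosh (u/2) := by
  have h : (u + iπ)/2 = u/2 + ((Real.pi:ℂ)/2) * Complex.I := by rw [iπ]; ring
  have hc : Complex.cos ((Real.pi:ℂ)/2) = 0 := by
    rw [show ((Real.pi:ℂ)/2) = ((Real.pi/2 : ℝ):ℂ) by push_cast; ring,
      ← Complex.ofReal_cos, Real.cos_pi_div_two, Complex.ofReal_zero]
  have hsn : Complex.sin ((Real.pi:ℂ)/2) = 1 := by
    rw [show ((Real.pi:ℂ)/2) = ((Real.pi/2 : ℝ):ℂ) by push_cast; ring,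
      ← Complex.ofReal_sin, Real.sin_pi_div_two, Complex.ofReal_one]
  rw [h, Complex.sinh_add, Complex.cosh_mul_I, Complex.sinh_mul_I, hc, hsn]
  ring

lemma sinh_as_half (u : ℂ) :
    Complex.sinh u = 2 * Complex.sinh (u/2) * Complex.cosh (u/2) := by
  rw [← Complex.sinh_two_mul]; congr 1; ring

lemma half_magic {v : ℂ} (hs : Complex.sinh (v/2) ≠ 0) (hc : Complex.cosh (v/2) ≠ 0) :
    1 / Complex.sinh (v/2) - Complex.I / Complex.sinh ((v+iπ)/2)
      = 2 * Complex.exp (-v/2) * (Complex.sinh v)⁻¹ := by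
  have hv := sinh_as_half v
  have hsv : Complex.sinh v ≠ 0 := by
    rw [hv]; exact mul_ne_zero (mul_ne_zero two_ne_zero hs) hc
  have key : Complex.cosh (v/2) - Complex.sinh (v/2) = Complex.exp (-v/2) := by
    rw [show -v/2 = -(v/2) by ring]; exact Complex.cosh_sub_sinh _
  rw [sinh_half_shift]
  field_simp [Complex.I_ne_zero]
  rw [← neg_div, ← key, hv]; ring

open Polynomial in
def coeffM {n : ℕ} (y : Fin n → ℂ) : Matrix (Fin n) (Fin n) ℂ :=
  Matrix.of fun m j => (∏ k ∈ Finset.univ.erase j, (X - C (y k)) : ℂ[X]).coeff m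

open Polynomial in
lemma D1 {n : ℕ} (x y : Fin n → ℂ) :
    Matrix.det (Matrix.of fun i j => ∏ k ∈ Finset.univ.erase j, (x i - y k)) =
      (∏ i : Fin n, ∏ j ∈ Ioi i, (x j - x i)) * (coeffM y).det := by
  have hfac : (Matrix.of fun i j => ∏ k ∈ Finset.univ.erase j, (x i - y k))
      = Matrix.vandermonde x * coeffM y := by
    ext i j
    rw [Matrix.mul_apply]
    have hdeg : (∏ k ∈ Finset.univ.erase j, (X - C (y k)) : ℂ[X]).natDegree < n := by
      rw [Polynomial.natDegree_prod _ _ (fun k _ => Polynomial.X_sub_C_ne_zero _)]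
      simp only [Polynomial.natDegree_X_sub_C, Finset.sum_const, smul_eq_mul, mul_one,
        Finset.card_erase_of_mem (Finset.mem_univ j), Finset.card_univ, Fintype.card_fin]
      have := j.pos
      omega
    calc (∏ k ∈ Finset.univ.erase j, (x i - y k))
        = (∏ k ∈ Finset.univ.erase j, (X - C (y k)) : ℂ[X]).eval (x i) := by
          simp [Polynomial.eval_prod]
      _ = ∑ m ∈ Finset.range n,
            (∏ k ∈ Finset.univ.erase j, (X - C (y k)) : ℂ[X]).coeff m * (x i) ^ m :=
          Polynomial.eval_eq_sum_range' hdeg _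
      _ = ∑ m : Fin n, Matrix.vandermonde x i m * coeffM y m j := by
          rw [← Fin.sum_univ_eq_sum_range]
          refine Finset.sum_congr rfl fun m _ => ?_
          simp [Matrix.vandermonde, coeffM, mul_comm]
  rw [hfac, Matrix.det_mul, Matrix.det_vandermonde]

lemma D2 {n : ℕ} (y : Fin n → ℂ) :
    (∏ i : Fin n, ∏ j ∈ Ioi i, (y j - y i)) * (coeffM y).det =
      ∏ j : Fin n, ∏ k ∈ Finset.univ.erase j, (y j - y k) := by
  rw [← D1 y y]
  have hdiag : (Matrix.of fun i j => ∏ k ∈ Finset.univ.erase j, (y i - y k))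
      = Matrix.diagonal (fun j => ∏ k ∈ Finset.univ.erase j, (y j - y k)) := by
    ext i j
    by_cases h : i = j
    · subst h; simp
    · rw [Matrix.of_apply, Matrix.diagonal_apply_ne _ h]
      exact Finset.prod_eq_zero (Finset.mem_erase.mpr ⟨h, Finset.mem_univ i⟩) (sub_self _)
  rw [hdiag, Matrix.det_diagonal]

lemma cauchy {n : ℕ} (x y : Fin n → ℂ) (hxy : ∀ i j, x i - y j ≠ 0) :
    Matrix.det (Matrix.of fun i j => (x i - y j)⁻¹) *
        ((∏ i : Fin n, ∏ j : Fin n, (x i - y j)) * (∏ i : Fin n, ∏ j ∈ Ioi i, (y j - y i))) =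
      (∏ i : Fin n, ∏ j ∈ Ioi i, (x j - x i)) *
        ∏ j : Fin n, ∏ k ∈ Finset.univ.erase j, (y j - y k) := by
  have h2 : (Matrix.of fun i j => (∏ k : Fin n, (x i - y k)) * (x i - y j)⁻¹)
      = (Matrix.of fun i j => ∏ k ∈ Finset.univ.erase j, (x i - y k)) := by
    ext i j
    rw [Matrix.of_apply, Matrix.of_apply,
      ← Finset.mul_prod_erase Finset.univ _ (Finset.mem_univ j)]
    field_simp [hxy i j]
  have h1 : Matrix.det (Matrix.of fun i j => (∏ k : Fin n, (x i - y k)) * (x i - y j)⁻¹)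
      = (∏ i : Fin n, ∏ k : Fin n, (x i - y k)) *
          Matrix.det (Matrix.of fun i j => (x i - y j)⁻¹) :=
    Matrix.det_mul_column _ _
  rw [h2, D1] at h1
  linear_combination (∏ i : Fin n, ∏ j ∈ Ioi i, (y j - y i)) * h1.symm +
    (∏ i : Fin n, ∏ j ∈ Ioi i, (x j - x i)) * D2 y

lemma sum_pairs {N : ℕ} (hN : 1 ≤ N) (c : Fin N → ℂ) :
    ∑ i : Fin N, ∑ j ∈ Ioi i, (c i + c j) = ((N:ℂ) - 1) * ∑ i : Fin N, c i := by
  have hIoi : ∀ i : Fin N, Ioi i = Finset.univ.filter (fun j => i < j) := by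
    intro i; ext j; simp
  have hIio : ∀ j : Fin N, Iio j = Finset.univ.filter (fun i => i < j) := by
    intro j; ext i; simp
  have step1 : ∑ i : Fin N, ∑ j ∈ Ioi i, (c i + c j)
      = ∑ i : Fin N, ((Ioi i).card • c i + ∑ j ∈ Ioi i, c j) := by
    refine Finset.sum_congr rfl fun i _ => ?_
    rw [Finset.sum_add_distrib, Finset.sum_const]
  have step2 : ∑ i : Fin N, ∑ j ∈ Ioi i, c j = ∑ j : Fin N, (Iio j).card • c j := by
    calc ∑ i : Fin N, ∑ j ∈ Ioi i, c j
        = ∑ i : Fin N, ∑ j : Fin N, (if i < j then c j else 0) := by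
          refine Finset.sum_congr rfl fun i _ => ?_
          rw [hIoi i, Finset.sum_filter]
      _ = ∑ j : Fin N, ∑ i : Fin N, (if i < j then c j else 0) := Finset.sum_comm
      _ = ∑ j : Fin N, (Iio j).card • c j := by
          refine Finset.sum_congr rfl fun j _ => ?_
          rw [← Finset.sum_filter, Finset.sum_const, hIio j]
  rw [step1, Finset.sum_add_distrib, step2, ← Finset.sum_add_distrib]
  have step3 : ∀ i : Fin N, (Ioi i).card • c i + (Iio i).card • c i = (N - 1) • c i := by
    intro i
    rw [← add_nsmul]
    congr 1
    rw [Fin.card_Ioi, Fin.card_Iio]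
    omega
  rw [Finset.sum_congr rfl (fun i _ => step3 i), ← Finset.smul_sum, nsmul_eq_mul]
  congr 1
  push_cast [Nat.cast_sub hN]
  ring

lemma FS {N : ℕ} (hN : 1 ≤ N) (p x : Fin N → ℂ)
    (hsp : ∀ i k, Complex.sinh (x i - p k) ≠ 0)
    (hw : ∀ i j, i ≠ j → Complex.sinh (p i - p j) ≠ 0) :
    Matrix.det (Matrix.of fun i k => (Complex.sinh (x i - p k))⁻¹) *
        (∏ i : Fin N, ∏ k : Fin N, Complex.sinh (x i - p k)) =
      ((2:ℂ)^N * 2^(∑ i : Fin N, (Ioi i).card) *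
          Complex.exp ((1-(N:ℂ)) * ∑ k : Fin N, p k) *
          (∏ j : Fin N, ∏ k ∈ Finset.univ.erase j,
            (Complex.exp (2*p j) - Complex.exp (2*p k))) /
        ((∏ i : Fin N, ∏ j ∈ Ioi i, (Complex.exp (2*p j) - Complex.exp (2*p i))) * 2^(N*N)))
        * Vand x := by
  set M : ℕ := ∑ i : Fin N, (Ioi i).card with hM
  clear_value M
  set Z : Fin N → ℂ := fun i => Complex.exp (2 * x i) with hZ
  set w : Fin N → ℂ := fun k => Complex.exp (2 * p k) with hwdef
  have hwne : ∀ i j, i ≠ j → w i - w j ≠ 0 := by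
    intro i j hij
    rw [hwdef]; simp only
    rw [exp_sq_sub]
    exact mul_ne_zero (mul_ne_zero two_ne_zero (Complex.exp_ne_zero _)) (hw i j hij)
  have hZwne : ∀ i k, Z i - w k ≠ 0 := by
    intro i k
    rw [hZ, hwdef]; simp only
    rw [exp_sq_sub]
    exact mul_ne_zero (mul_ne_zero two_ne_zero (Complex.exp_ne_zero _)) (hsp i k)
  have hinv : ∀ i k, (Complex.sinh (x i - p k))⁻¹
      = (2 * Complex.exp (x i)) * (Complex.exp (p k) * (Z i - w k)⁻¹) := by
    intro i k
    rw [hZ, hwdef]; simp only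
    rw [exp_sq_sub, Complex.exp_add]
    field_simp
  have hdet : Matrix.det (Matrix.of fun i k => (Complex.sinh (x i - p k))⁻¹)
      = (∏ i : Fin N, (2 * Complex.exp (x i))) * ((∏ k : Fin N, Complex.exp (p k)) *
          Matrix.det (Matrix.of fun i k => (Z i - w k)⁻¹)) := by
    rw [show (Matrix.of fun i k => (Complex.sinh (x i - p k))⁻¹)
        = (Matrix.of fun i k => (2 * Complex.exp (x i)) *
            (Complex.exp (p k) * (Z i - w k)⁻¹)) from by ext i k; exact hinv i k]
    rw [Matrix.det_mul_column (fun i => 2 * Complex.exp (x i)) (fun i k => Complex.exp (p k) * (Z i - w k)⁻¹)]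
    congr 1
    exact Matrix.det_mul_row (fun k => Complex.exp (p k)) (Matrix.of fun i k => (Z i - w k)⁻¹)
  have hC := cauchy Z w hZwne
  have hA : (∏ i : Fin N, (2 * Complex.exp (x i))) = 2^N * Complex.exp (∑ i : Fin N, x i) := by
    rw [Finset.prod_mul_distrib, Finset.prod_const, ← Complex.exp_sum]
    simp
  have hB : (∏ k : Fin N, Complex.exp (p k)) = Complex.exp (∑ k : Fin N, p k) :=
    (Complex.exp_sum _ _).symm
  have hΔZ : (∏ i : Fin N, ∏ j ∈ Ioi i, (Z j - Z i))
      = 2^M *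
          Complex.exp (((N:ℂ) - 1) * ∑ i : Fin N, x i) * Vand x := by
    calc ∏ i : Fin N, ∏ j ∈ Ioi i, (Z j - Z i)
        = ∏ i : Fin N, ∏ j ∈ Ioi i,
            (2 * Complex.exp (x i + x j) * Complex.sinh (x j - x i)) := by
          refine Finset.prod_congr rfl fun i _ => Finset.prod_congr rfl fun j _ => ?_
          rw [hZ]; simp only
          rw [exp_sq_sub, add_comm (x j) (x i)]
      _ = (∏ i : Fin N, ∏ j ∈ Ioi i, (2:ℂ)) *
          (∏ i : Fin N, ∏ j ∈ Ioi i, Complex.exp (x i + x j)) * Vand x := by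
          simp only [Finset.prod_mul_distrib]; rfl
      _ = 2^M *
          Complex.exp (((N:ℂ) - 1) * ∑ i : Fin N, x i) * Vand x := by
          congr 1
          congr 1
          · rw [hM]; simp [Finset.prod_const, Finset.prod_pow_eq_pow_sum]
          · simp only [← Complex.exp_sum]
            rw [sum_pairs hN]
  have hPiC : (∏ i : Fin N, ∏ k : Fin N, (Z i - w k))
      = 2^(N*N) * Complex.exp ((N:ℂ) * (∑ i : Fin N, x i) + (N:ℂ) * (∑ k : Fin N, p k)) *
          (∏ i : Fin N, ∏ k : Fin N, Complex.sinh (x i - p k)) := by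
    calc ∏ i : Fin N, ∏ k : Fin N, (Z i - w k)
        = ∏ i : Fin N, ∏ k : Fin N,
            (2 * Complex.exp (x i + p k) * Complex.sinh (x i - p k)) := by
          refine Finset.prod_congr rfl fun i _ => Finset.prod_congr rfl fun k _ => ?_
          rw [hZ, hwdef]; simp only
          rw [exp_sq_sub]
      _ = (∏ i : Fin N, ∏ k : Fin N, (2:ℂ)) *
          (∏ i : Fin N, ∏ k : Fin N, Complex.exp (x i + p k)) *
          (∏ i : Fin N, ∏ k : Fin N, Complex.sinh (x i - p k)) := by
          simp only [Finset.prod_mul_distrib]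
      _ = 2^(N*N) * Complex.exp ((N:ℂ) * (∑ i : Fin N, x i) + (N:ℂ) * (∑ k : Fin N, p k)) *
          (∏ i : Fin N, ∏ k : Fin N, Complex.sinh (x i - p k)) := by
          congr 2
          · simp [Finset.prod_const, ← pow_mul]
          · simp only [← Complex.exp_sum]
            congr 1
            calc ∑ i : Fin N, ∑ k : Fin N, (x i + p k)
                = ∑ i : Fin N, ((N:ℕ) • x i + ∑ k : Fin N, p k) := by
                  refine Finset.sum_congr rfl fun i _ => ?_
                  rw [Finset.sum_add_distrib, Finset.sum_const, Finset.card_univ,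
                    Fintype.card_fin]
              _ = (N:ℂ) * (∑ i : Fin N, x i) + (N:ℂ) * (∑ k : Fin N, p k) := by
                  rw [Finset.sum_add_distrib, ← Finset.smul_sum, Finset.sum_const,
                    Finset.card_univ, Fintype.card_fin]
                  simp [nsmul_eq_mul]
  have hDpw : (∏ i : Fin N, ∏ j ∈ Ioi i, (w j - w i)) ≠ 0 :=
    Finset.prod_ne_zero_iff.mpr fun i _ => Finset.prod_ne_zero_iff.mpr
      fun j hj => hwne j i (Finset.mem_Ioi.mp hj).ne'
  have hPiZw : (∏ i : Fin N, ∏ k : Fin N, (Z i - w k)) ≠ 0 :=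
    Finset.prod_ne_zero_iff.mpr fun i _ => Finset.prod_ne_zero_iff.mpr
      fun k _ => hZwne i k
  have hPis : (∏ i : Fin N, ∏ k : Fin N, Complex.sinh (x i - p k)) ≠ 0 :=
    Finset.prod_ne_zero_iff.mpr fun i _ => Finset.prod_ne_zero_iff.mpr
      fun k _ => hsp i k
  have hdZ : Matrix.det (Matrix.of fun i k => (Z i - w k)⁻¹)
      = ((∏ i : Fin N, ∏ j ∈ Ioi i, (Z j - Z i)) *
          ∏ j : Fin N, ∏ k ∈ Finset.univ.erase j, (w j - w k)) /
        ((∏ i : Fin N, ∏ k : Fin N, (Z i - w k)) *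
          (∏ i : Fin N, ∏ j ∈ Ioi i, (w j - w i))) := by
    rw [eq_div_iff (mul_ne_zero hPiZw hDpw)]
    linear_combination hC
  have heq : Complex.exp (∑ i : Fin N, x i) * Complex.exp (∑ k : Fin N, p k) *
        Complex.exp (((N:ℂ)-1) * ∑ i : Fin N, x i)
      = Complex.exp ((1-(N:ℂ)) * ∑ k : Fin N, p k) *
        Complex.exp ((N:ℂ) * (∑ i : Fin N, x i) + (N:ℂ) * (∑ k : Fin N, p k)) := by
    rw [← Complex.exp_add, ← Complex.exp_add, ← Complex.exp_add]
    congr 1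
    ring
  show Matrix.det (Matrix.of fun i k => (Complex.sinh (x i - p k))⁻¹) *
      (∏ i : Fin N, ∏ k : Fin N, Complex.sinh (x i - p k)) =
    ((2:ℂ)^N * 2^M *
        Complex.exp ((1-(N:ℂ)) * ∑ k : Fin N, p k) *
        (∏ j : Fin N, ∏ k ∈ Finset.univ.erase j, (w j - w k)) /
      ((∏ i : Fin N, ∏ j ∈ Ioi i, (w j - w i)) * 2^(N*N))) * Vand x
  rw [hdet, hA, hB, hdZ, hΔZ, hPiC]
  field_simp
  rw [mul_add (N:ℂ), mul_comm (∑ k : Fin N, p k) (1 - (N:ℂ))]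
  linear_combination (Vand x * ∏ j : Fin N, ∏ k ∈ Finset.univ.erase j, (w j - w k)) * heq

lemma trig_shift {N : ℕ} (r : Fin N → ℂ) (l : ℂ) :
    trigPoly r (l + 2*iπ) = (-1)^N * trigPoly r l := by
  unfold trigPoly
  have h : ∀ j, Complex.sinh ((l + 2*iπ - r j)/2) = -Complex.sinh ((l - r j)/2) := by
    intro j
    rw [show (l + 2*iπ - r j)/2 = (l - r j)/2 + iπ by ring, sinh_add_pi_I]
  rw [Finset.prod_congr rfl (fun j _ => h j),
    Finset.prod_congr rfl
      (fun j (_ : j ∈ Finset.univ) => (neg_one_mul (Complex.sinh ((l - r j)/2))).symm),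
    Finset.prod_mul_distrib, Finset.prod_const, Finset.card_univ, Fintype.card_fin]

lemma prod_sinh_eq {N : ℕ} (r : Fin N → ℂ) (v : ℂ) :
    ∏ k, Complex.sinh (v - r k)
      = (-(2*Complex.I))^N * trigPoly r v * trigPoly r (v + iπ) := by
  unfold trigPoly
  have h : ∀ k, Complex.sinh (v - r k)
      = (-(2*Complex.I)) *
          (Complex.sinh ((v - r k)/2) * Complex.sinh ((v + iπ - r k)/2)) := by
    intro k
    rw [show (v + iπ - r k)/2 = ((v - r k) + iπ)/2 by ring, sinh_half_shift,
      sinh_as_half (v - r k)]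
    ring_nf
    rw [Complex.I_sq]
    ring
  simp only [h, Finset.prod_mul_distrib, Finset.prod_const, Finset.card_univ, Fintype.card_fin]
  ring

lemma det_expand {N : ℕ} (C B : Fin N → Fin N → ℂ) :
    Matrix.det (Matrix.of fun i k => C i k + B i k)
      = ∑ s : Finset (Fin N),
          Matrix.det (Matrix.of fun i k => if i ∈ s then C i k else B i k) := by
  have h := ((Matrix.detRowAlternating :
      AlternatingMap ℂ (Fin N → ℂ) ℂ (Fin N)).toMultilinearMap).map_add_univ C B
  refine Eq.trans ?_ (h.trans ?_)
  · rfl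
  · refine Finset.sum_congr rfl fun s _ => ?_
    have hp : s.piecewise C B = fun i k => if i ∈ s then C i k else B i k := by
      funext i k
      by_cases hi : i ∈ s <;> simp [Finset.piecewise, hi]
    exact congrArg Matrix.det hp

def finsetEquiv (N : ℕ) : (Fin N → Fin 2) ≃ Finset (Fin N) where
  toFun h := Finset.univ.filter (fun n => h n = 1)
  invFun s := fun n => if n ∈ s then 1 else 0
  left_inv h := by
    funext n
    have h2 : ∀ v : Fin 2, v = 0 ∨ v = 1 := by decide
    by_cases hn : h n = 1 <;> simp [hn]
    rcases h2 (h n) with h0 | h1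
    · exact h0.symm
    · exact absurd h1 hn
  right_inv s := by
    ext n
    by_cases hn : n ∈ s <;> simp [hn]

end SPaux

open SPaux in
/-- Intermediate representation (5.19) of the scalar product in
terms of functions of double period (Identity 3, first formula). -/
theorem scalar_product_double_period (N : ℕ) (hN : 1 ≤ N) (η : ℂ)
    (ξ p q : Fin N → ℂ) (P Q ftil : ℂ → ℂ)
    (hP : P = trigPoly p) (hQ : Q = trigPoly q)
    (hftil : ftil = fun u => P (u - η + iπ) * Q u / (P (u + iπ) * Q (u - η)))
    (hV : Vand ξ ≠ 0)
    (hPQξ : ∀ n, P (ξ n - η) * Q (ξ n - η) ≠ 0)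
    (hPper : ∀ n, P (ξ n - η) * P (ξ n + iπ) = -(P (ξ n - η + iπ) * P (ξ n)))
    (hQper : ∀ n, Q (ξ n - η) * Q (ξ n + iπ) = -(Q (ξ n - η + iπ) * Q (ξ n)))
    (hξξ : ∀ i j, i ≠ j → ∀ m : ℤ, ξ i - ξ j ≠ (m : ℂ) * iπ)
    (hpp : ∀ i j, i ≠ j → ∀ m : ℤ, p i - p j ≠ (m : ℂ) * iπ)
    (hξp : ∀ i k, ∀ m : ℤ, ξ i - p k ≠ (m : ℂ) * iπ)
    (hξpη : ∀ i k, ∀ m : ℤ, ξ i - p k - η ≠ (m : ℂ) * iπ)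
    (hPξ : ∀ i, P (ξ i) ≠ 0)
    (hPξπ : ∀ i, P (ξ i + iπ) ≠ 0)
    (hQξη : ∀ i, Q (ξ i - η) ≠ 0)
    (hQξηπ : ∀ i, Q (ξ i - η + iπ) ≠ 0)
    (α : ℂ) :
    SP η ξ P Q α =
      (Complex.exp (∑ i, (ξ i - p i) / 2) / 2 ^ N) *
        Matrix.det (Matrix.of (fun i k : Fin N =>
          1 / Complex.sinh ((ξ i - p k) / 2) -
            Complex.I / Complex.sinh ((ξ i - p k + iπ) / 2) +
            α * Complex.exp (-η / 2) *
              (ftil (ξ i) / Complex.sinh ((ξ i - p k - η) / 2) -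
                Complex.I * ftil (ξ i + iπ) /
                  Complex.sinh ((ξ i - p k - η + iπ) / 2)))) /
        Matrix.det (Matrix.of (fun i k : Fin N => 1 / Complex.sinh (ξ i - p k))) := by
  classical
  -- basic nonvanishing facts
  have hξpη' : ∀ i k, ∀ m : ℤ, ξ i - η - p k ≠ (m:ℂ) * iπ := by
    intro i k m hc; exact hξpη i k m (by linear_combination hc)
  have hsξp : ∀ i k, Complex.sinh (ξ i - p k) ≠ 0 := fun i k => sinh_ne_zero' (hξp i k)
  have hsξpη : ∀ i k, Complex.sinh (ξ i - η - p k) ≠ 0 := fun i k =>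
    sinh_ne_zero' (hξpη' i k)
  have hspp : ∀ i j, i ≠ j → Complex.sinh (p i - p j) ≠ 0 := fun i j hij =>
    sinh_ne_zero' (hpp i j hij)
  have hPz : ∀ i, P (ξ i - η) ≠ 0 := fun i => (mul_ne_zero_iff.mp (hPQξ i)).1
  have hQz : ∀ i, Q (ξ i - η) ≠ 0 := fun i => (mul_ne_zero_iff.mp (hPQξ i)).2
  have hftilval : ∀ u, ftil u = P (u - η + iπ) * Q u / (P (u + iπ) * Q (u - η)) :=
    fun u => by rw [hftil]
  have hPshift : ∀ x, P (x + 2*iπ) = (-1)^N * P x := by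
    intro x; rw [hP]; exact trig_shift p x
  have hprodSinh : ∀ v, ∏ k, Complex.sinh (v - p k)
      = (-(2*Complex.I))^N * P v * P (v + iπ) := by
    intro v; rw [hP]; exact prod_sinh_eq p v
  -- periodicity of ftil
  have hgπ : ∀ i, ftil (ξ i + iπ) = ftil (ξ i) := by
    intro i
    rw [hftilval, hftilval]
    rw [show ξ i + iπ - η + iπ = (ξ i - η) + 2*iπ from by ring, hPshift,
      show ξ i + iπ + iπ = (ξ i) + 2*iπ from by ring, hPshift,
      show ξ i + iπ - η = (ξ i - η) + iπ from by ring]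
    have hne1 : ((-1:ℂ))^N * P (ξ i) * Q (ξ i - η + iπ) ≠ 0 :=
      mul_ne_zero (mul_ne_zero (pow_ne_zero _ (by norm_num)) (hPξ i)) (hQξηπ i)
    have hne2 : P (ξ i + iπ) * Q (ξ i - η) ≠ 0 := mul_ne_zero (hPξπ i) (hQz i)
    rw [div_eq_div_iff (by
        rw [show (-1:ℂ)^N * P (ξ i) * Q ((ξ i - η) + iπ) =
          (-1:ℂ)^N * P (ξ i) * Q (ξ i - η + iπ) from by ring_nf]
        exact hne1) hne2]
    have hmul : (P (ξ i - η) * P (ξ i + iπ)) * (Q (ξ i - η) * Q (ξ i + iπ))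
        = (P (ξ i - η + iπ) * P (ξ i)) * (Q (ξ i - η + iπ) * Q (ξ i)) := by
      linear_combination (Q (ξ i - η) * Q (ξ i + iπ)) * hPper i -
        (P (ξ i - η + iπ) * P (ξ i)) * hQper i
    linear_combination ((-1:ℂ)^N) * hmul
  -- entrywise rewriting of the numerator matrix
  have hentry : ∀ i k,
      1 / Complex.sinh ((ξ i - p k) / 2) -
        Complex.I / Complex.sinh ((ξ i - p k + iπ) / 2) +
        α * Complex.exp (-η / 2) *
          (ftil (ξ i) / Complex.sinh ((ξ i - p k - η) / 2) -
            Complex.I * ftil (ξ i + iπ) /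
              Complex.sinh ((ξ i - p k - η + iπ) / 2))
      = (2 * Complex.exp (-(ξ i)/2)) * (Complex.exp (p k / 2) *
          ((Complex.sinh (ξ i - p k))⁻¹ +
            α * ftil (ξ i) * (Complex.sinh (ξ i - η - p k))⁻¹)) := by
    intro i k
    have h1 := half_magic (v := ξ i - p k)
      (sinh_half_ne_zero (hξp i k)) (cosh_half_ne_zero (hξp i k))
    have h2 := half_magic (v := ξ i - η - p k)
      (sinh_half_ne_zero (hξpη' i k)) (cosh_half_ne_zero (hξpη' i k))
    rw [hgπ i, show ξ i - p k - η = ξ i - η - p k from by ring]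
    have he1 : Complex.exp (-(ξ i - p k)/2)
        = Complex.exp (-(ξ i)/2) * Complex.exp (p k/2) := by
      rw [← Complex.exp_add]; congr 1; ring
    have he2 : Complex.exp (-η/2) * Complex.exp (-(ξ i - η - p k)/2)
        = Complex.exp (-(ξ i)/2) * Complex.exp (p k/2) := by
      rw [← Complex.exp_add, ← Complex.exp_add]; congr 1; ring
    linear_combination h1 + (α * Complex.exp (-η/2) * ftil (ξ i)) * h2 +
      (2 * (Complex.sinh (ξ i - p k))⁻¹) * he1 +
      (2 * α * ftil (ξ i) * (Complex.sinh (ξ i - η - p k))⁻¹) * he2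
  -- rewrite the numerator matrix determinant
  rw [show (Matrix.of (fun i k : Fin N =>
        1 / Complex.sinh ((ξ i - p k) / 2) -
          Complex.I / Complex.sinh ((ξ i - p k + iπ) / 2) +
          α * Complex.exp (-η / 2) *
            (ftil (ξ i) / Complex.sinh ((ξ i - p k - η) / 2) -
              Complex.I * ftil (ξ i + iπ) /
                Complex.sinh ((ξ i - p k - η + iπ) / 2))))
      = (Matrix.of (fun i k : Fin N => (2 * Complex.exp (-(ξ i)/2)) *
          (Complex.exp (p k / 2) *
            ((Complex.sinh (ξ i - p k))⁻¹ +
              α * ftil (ξ i) * (Complex.sinh (ξ i - η - p k))⁻¹))))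
    from by ext i k; exact hentry i k]
  rw [show (Matrix.of (fun i k : Fin N => 1 / Complex.sinh (ξ i - p k)))
      = (Matrix.of (fun i k : Fin N => (Complex.sinh (ξ i - p k))⁻¹))
    from by ext i k; rw [Matrix.of_apply, Matrix.of_apply, one_div]]
  rw [Matrix.det_mul_column (fun i => 2 * Complex.exp (-(ξ i)/2)) (fun i k => Complex.exp (p k / 2) * ((Complex.sinh (ξ i - p k))⁻¹ + α * ftil (ξ i) * (Complex.sinh (ξ i - η - p k))⁻¹))]
  rw [show (Matrix.det fun i k : Fin N => Complex.exp (p k / 2) *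
        ((Complex.sinh (ξ i - p k))⁻¹ +
          α * ftil (ξ i) * (Complex.sinh (ξ i - η - p k))⁻¹))
      = (∏ k : Fin N, Complex.exp (p k / 2)) *
          Matrix.det (Matrix.of fun i k : Fin N =>
            (Complex.sinh (ξ i - p k))⁻¹ +
              α * ftil (ξ i) * (Complex.sinh (ξ i - η - p k))⁻¹)
    from Matrix.det_mul_row _ _]
  -- collapse the prefactor
  have hpref : Complex.exp (∑ i, (ξ i - p i) / 2) / 2 ^ N *
      ((∏ i : Fin N, (2 * Complex.exp (-(ξ i)/2))) *
        (∏ k : Fin N, Complex.exp (p k / 2))) = 1 := by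
    rw [Finset.prod_mul_distrib, Finset.prod_const, Finset.card_univ, Fintype.card_fin,
      ← Complex.exp_sum, ← Complex.exp_sum]
    have h0 : (∑ i, (ξ i - p i)/2) + ((∑ i : Fin N, -(ξ i)/2) + (∑ k : Fin N, p k/2)) = 0 := by
      rw [← Finset.sum_add_distrib, ← Finset.sum_add_distrib]
      exact Finset.sum_eq_zero fun i _ => by ring
    have hE : Complex.exp (∑ i, (ξ i - p i)/2) *
        (Complex.exp (∑ i : Fin N, -(ξ i)/2) * Complex.exp (∑ k : Fin N, p k/2)) = 1 := by
      rw [← Complex.exp_add, ← Complex.exp_add, h0, Complex.exp_zero]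
    have h2N : ((2:ℂ))^N ≠ 0 := pow_ne_zero _ two_ne_zero
    field_simp
    simp only [neg_div] at hE ⊢; linear_combination hE
  rw [show Complex.exp (∑ i, (ξ i - p i) / 2) / 2 ^ N *
        ((∏ i : Fin N, 2 * Complex.exp (-ξ i / 2)) *
          ((∏ k : Fin N, Complex.exp (p k / 2)) *
            Matrix.det (Matrix.of fun i k : Fin N =>
              (Complex.sinh (ξ i - p k))⁻¹ +
                α * ftil (ξ i) * (Complex.sinh (ξ i - η - p k))⁻¹)))
      = (Complex.exp (∑ i, (ξ i - p i) / 2) / 2 ^ N *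
          ((∏ i : Fin N, (2 * Complex.exp (-(ξ i)/2))) *
            (∏ k : Fin N, Complex.exp (p k / 2)))) *
          Matrix.det (Matrix.of fun i k : Fin N =>
            (Complex.sinh (ξ i - p k))⁻¹ +
              α * ftil (ξ i) * (Complex.sinh (ξ i - η - p k))⁻¹)
    from by ring, hpref, one_mul]
  -- now the goal is SP = det(C+B) / F ξ
  have hFSξ := FS hN p ξ hsξp hspp
  have hKKne : ((2:ℂ)^N * 2^(∑ i : Fin N, (Ioi i).card) *
      Complex.exp ((1-(N:ℂ)) * ∑ k : Fin N, p k) *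
      (∏ j : Fin N, ∏ k ∈ Finset.univ.erase j,
        (Complex.exp (2*p j) - Complex.exp (2*p k))) /
    ((∏ i : Fin N, ∏ j ∈ Ioi i, (Complex.exp (2*p j) - Complex.exp (2*p i))) * 2^(N*N))) ≠ 0 := by
    have hDD : (∏ j : Fin N, ∏ k ∈ Finset.univ.erase j,
        (Complex.exp (2*p j) - Complex.exp (2*p k))) ≠ 0 :=
      Finset.prod_ne_zero_iff.mpr fun j _ => Finset.prod_ne_zero_iff.mpr fun k hk => by
        rw [exp_sq_sub]
        exact mul_ne_zero (mul_ne_zero two_ne_zero (Complex.exp_ne_zero _))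
          (hspp j k (Ne.symm (Finset.mem_erase.mp hk).1))
    have hDw : (∏ i : Fin N, ∏ j ∈ Ioi i,
        (Complex.exp (2*p j) - Complex.exp (2*p i))) ≠ 0 :=
      Finset.prod_ne_zero_iff.mpr fun i _ => Finset.prod_ne_zero_iff.mpr fun j hj => by
        rw [exp_sq_sub]
        exact mul_ne_zero (mul_ne_zero two_ne_zero (Complex.exp_ne_zero _))
          (hspp j i (Finset.mem_Ioi.mp hj).ne')
    exact div_ne_zero (mul_ne_zero (mul_ne_zero (mul_ne_zero (pow_ne_zero _ two_ne_zero)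
      (pow_ne_zero _ two_ne_zero)) (Complex.exp_ne_zero _)) hDD)
      (mul_ne_zero hDw (pow_ne_zero _ two_ne_zero))
  have hPiξne : (∏ i : Fin N, ∏ k : Fin N, Complex.sinh (ξ i - p k)) ≠ 0 :=
    Finset.prod_ne_zero_iff.mpr fun i _ => Finset.prod_ne_zero_iff.mpr fun k _ => hsξp i k
  have hFξne : Matrix.det (Matrix.of fun i k : Fin N => (Complex.sinh (ξ i - p k))⁻¹) ≠ 0 := by
    intro h0
    rw [h0, zero_mul] at hFSξ
    exact (mul_ne_zero hKKne hV) hFSξ.symm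
  rw [eq_div_iff hFξne]
  simp only [SP]
  rw [← Finset.sum_div, div_mul_eq_mul_div, div_eq_iff hV]
  rw [det_expand (fun i k => (Complex.sinh (ξ i - p k))⁻¹)
    (fun i k => α * ftil (ξ i) * (Complex.sinh (ξ i - η - p k))⁻¹)]
  set ys : Finset (Fin N) → Fin N → ℂ := fun s n => if n ∈ s then ξ n else ξ n - η with hysdef
  have hscale : ∀ s : Finset (Fin N),
      Matrix.det (Matrix.of fun i k =>
        if i ∈ s then (Complex.sinh (ξ i - p k))⁻¹
        else α * ftil (ξ i) * (Complex.sinh (ξ i - η - p k))⁻¹)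
      = (∏ i : Fin N, (if i ∈ s then (1:ℂ) else α * ftil (ξ i))) *
          Matrix.det (Matrix.of fun i k => (Complex.sinh (ys s i - p k))⁻¹) := by
    intro s
    rw [show (Matrix.of fun i k : Fin N =>
        if i ∈ s then (Complex.sinh (ξ i - p k))⁻¹
        else α * ftil (ξ i) * (Complex.sinh (ξ i - η - p k))⁻¹)
      = (Matrix.of fun i k : Fin N => (if i ∈ s then (1:ℂ) else α * ftil (ξ i)) *
          (Complex.sinh (ys s i - p k))⁻¹)
      from by
        ext i k
        by_cases hi : i ∈ s <;> simp [hysdef, hi]]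
    exact Matrix.det_mul_column _ _
  rw [Finset.sum_congr rfl fun s _ => hscale s]
  rw [Finset.sum_mul, Finset.sum_mul]
  refine Fintype.sum_equiv (finsetEquiv N) _ _ (fun h => ?_)
  have hmem : ∀ n, n ∈ finsetEquiv N h ↔ h n = 1 := by
    intro n; simp [finsetEquiv]
  have h2cases : ∀ v : Fin 2, v = 0 ∨ v = 1 := by decide
  set s : Finset (Fin N) := finsetEquiv N h with hsdef
  -- translate the two h-indexed pieces
  have htA : (∏ n, (α * P (ξ n) * Q (ξ n) / (P (ξ n - η) * Q (ξ n - η))) ^ (1 - (h n : ℕ)))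
      = ∏ n, (if n ∈ s then (1:ℂ)
          else α * P (ξ n) * Q (ξ n) / (P (ξ n - η) * Q (ξ n - η))) := by
    refine Finset.prod_congr rfl fun n _ => ?_
    by_cases hn : h n = 1
    · rw [if_pos ((hmem n).mpr hn), hn]
      norm_num
    · rcases h2cases (h n) with h0 | h1
      · rw [if_neg (fun hc => hn ((hmem n).mp hc)), h0]
        norm_num
      · exact absurd h1 hn
  have htV : (fun n => ξ n - ((1 - (h n : ℕ) : ℕ) : ℂ) * η) = ys s := by
    funext n
    by_cases hn : h n = 1
    · rw [hysdef]
      simp only [if_pos ((hmem n).mpr hn), hn]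
      norm_num
    · rcases h2cases (h n) with h0 | h1
      · rw [hysdef]
        simp only [if_neg (fun hc => hn ((hmem n).mp hc)), h0]
        norm_num
      · exact absurd h1 hn
  rw [htA, htV]
  -- the per-subset identity
  have hsyp : ∀ i k, Complex.sinh (ys s i - p k) ≠ 0 := by
    intro i k
    by_cases hi : i ∈ s
    · simpa [hysdef, hi] using hsξp i k
    · simpa [hysdef, hi] using hsξpη i k
  have hFSy := FS hN p (ys s) hsyp hspp
  have hPiyne : (∏ i : Fin N, ∏ k : Fin N, Complex.sinh (ys s i - p k)) ≠ 0 :=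
    Finset.prod_ne_zero_iff.mpr fun i _ => Finset.prod_ne_zero_iff.mpr fun k _ => hsyp i k
  have key : (∏ n, (if n ∈ s then (1:ℂ)
        else α * P (ξ n) * Q (ξ n) / (P (ξ n - η) * Q (ξ n - η)))) *
      (∏ i : Fin N, ∏ k : Fin N, Complex.sinh (ys s i - p k))
      = (∏ i : Fin N, (if i ∈ s then (1:ℂ) else α * ftil (ξ i))) *
        (∏ i : Fin N, ∏ k : Fin N, Complex.sinh (ξ i - p k)) := by
    rw [← Finset.prod_mul_distrib, ← Finset.prod_mul_distrib]
    refine Finset.prod_congr rfl fun i _ => ?_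
    by_cases hi : i ∈ s
    · simp [hysdef, hi]
    · simp only [hysdef, if_neg hi]
      have hy : (∏ k : Fin N, Complex.sinh ((ξ i - η) - p k))
          = (-(2*Complex.I))^N * P (ξ i - η) * P ((ξ i - η) + iπ) := hprodSinh (ξ i - η)
      have hx : (∏ k : Fin N, Complex.sinh (ξ i - p k))
          = (-(2*Complex.I))^N * P (ξ i) * P (ξ i + iπ) := hprodSinh (ξ i)
      rw [show (∏ k : Fin N, Complex.sinh (ξ i - η - p k))
          = ∏ k : Fin N, Complex.sinh ((ξ i - η) - p k) from rfl, hy, hx,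
        hftilval (ξ i)]
      have hPη : P (ξ i - η) ≠ 0 := hPz i
      have hQη : Q (ξ i - η) ≠ 0 := hQz i
      have hPπ : P (ξ i + iπ) ≠ 0 := hPξπ i
      field_simp
  apply mul_right_cancel₀ (mul_ne_zero hPiξne hPiyne)
  linear_combination
    ((∏ n, (if n ∈ s then (1:ℂ)
        else α * P (ξ n) * Q (ξ n) / (P (ξ n - η) * Q (ξ n - η)))) *
      Vand (ys s) *
      (∏ i : Fin N, ∏ k : Fin N, Complex.sinh (ys s i - p k))) * hFSξ -
    ((∏ i : Fin N, (if i ∈ s then (1:ℂ) else α * ftil (ξ i))) * Vand ξ *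
      (∏ i : Fin N, ∏ k : Fin N, Complex.sinh (ξ i - p k))) * hFSy +
    (((2:ℂ)^N * 2^(∑ i : Fin N, (Ioi i).card) *
        Complex.exp ((1-(N:ℂ)) * ∑ k : Fin N, p k) *
        (∏ j : Fin N, ∏ k ∈ Finset.univ.erase j,
          (Complex.exp (2*p j) - Complex.exp (2*p k))) /
      ((∏ i : Fin N, ∏ j ∈ Ioi i, (Complex.exp (2*p j) - Complex.exp (2*p i))) * 2^(N*N))) *
      Vand ξ * Vand (ys s)) * key

end
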